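/- A hole (chordless cycle of length n ≥ 4) is not a path graph, and every proper induced subgraph of a hole is a path graph. -/

import Mathlib

open SimpleGraph

variable {V : Type*}

/-- `S` separates `u` and `w` in `G`: every walk from `u` to `w` meets `S`. -/
def Separates (G : SimpleGraph V) (S : Set V) (u w : V) : Prop :=
  ∀ p : G.Walk u w, ∃ x ∈ p.support, x ∈ S

/-- `S` is a minimal `{u,w}`-separator. -/
def IsMinUWSeparator (G : SimpleGraph V) (S : Set V) (u w : V) : Prop :=
  u ≠ w ∧ ¬ G.Adj u w ∧ u ∉ S ∧ w ∉ S ∧ Separates G S u w ∧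
    ∀ S' ⊂ S, ¬ Separates G S' u w

/-- `S` is a minimal separator of `G`. -/
def IsMinSeparator (G : SimpleGraph V) (S : Set V) : Prop :=
  ∃ u w : V, IsMinUWSeparator G S u w

/-- A vertex is simplicial if its neighborhood is a clique. -/
def IsSimplicial (G : SimpleGraph V) (v : V) : Prop :=
  G.IsClique (G.neighborSet v)

/-- A maximal clique (as a vertex set). -/
def IsMaxClique (G : SimpleGraph V) (s : Set V) : Prop :=
  G.IsClique s ∧ ∀ t : Set V, G.IsClique t → s ⊆ t → s = t

/-- A graph is chordal if it has no induced cycle of length at least 4. -/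
def Chordal (G : SimpleGraph V) : Prop :=
  ∀ n : ℕ, 4 ≤ n → IsEmpty (SimpleGraph.cycleGraph n ↪g G)

/-- The type of maximal cliques of `G`. -/
abbrev MaxCliques (G : SimpleGraph V) := {s : Set V // IsMaxClique G s}

/-- `T` is a clique tree of `G`: a tree on the maximal cliques such that for each vertex
the cliques containing it induce a connected subgraph. -/
def IsCliqueTree (G : SimpleGraph V) (T : SimpleGraph (MaxCliques G)) : Prop :=
  T.IsTree ∧ ∀ v : V, (T.induce {Q : MaxCliques G | v ∈ Q.1}).Connected

/-- The set `X` induces a path in `T` (assuming `T` is a tree: connected with max degree 2). -/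
def InducesPath {α : Type*} (T : SimpleGraph α) (X : Set α) : Prop :=
  (T.induce X).Connected ∧ ∀ x : X, ((T.induce X).neighborSet x).ncard ≤ 2

/-- `T` is a clique path tree of `G`. -/
def IsCliquePathTree (G : SimpleGraph V) (T : SimpleGraph (MaxCliques G)) : Prop :=
  T.IsTree ∧ ∀ v : V, InducesPath T {Q : MaxCliques G | v ∈ Q.1}

/-- `G` is a path graph: the empty graph, or a graph admitting a clique path tree. -/
def IsPathGraph (G : SimpleGraph V) : Prop :=
  IsEmpty V ∨ ∃ T : SimpleGraph (MaxCliques G), IsCliquePathTree G T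

/-- `G` is an interval graph: intersection graph of closed real intervals. -/
def IsIntervalGraph (G : SimpleGraph V) : Prop :=
  ∃ f : V → Set ℝ, (∀ v, ∃ a b : ℝ, a ≤ b ∧ f v = Set.Icc a b) ∧
    ∀ u v : V, u ≠ v → (G.Adj u v ↔ (f u ∩ f v).Nonempty)

/-- `a` is a middle of `b, c`: every walk from `b` to `c` meets `N(a)`. -/
def IsMiddle (G : SimpleGraph V) (a b c : V) : Prop :=
  ∀ p : G.Walk b c, ∃ x ∈ p.support, G.Adj a x

/-- `a, b, c` form an asteroidal triple. -/
def AsteroidalTriple (G : SimpleGraph V) (a b c : V) : Prop :=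
  a ≠ b ∧ a ≠ c ∧ b ≠ c ∧ ¬ G.Adj a b ∧ ¬ G.Adj a c ∧ ¬ G.Adj b c ∧
  (∃ p : G.Walk b c, ∀ x ∈ p.support, ¬ G.Adj a x) ∧
  (∃ p : G.Walk a c, ∀ x ∈ p.support, ¬ G.Adj b x) ∧
  (∃ p : G.Walk a b, ∀ x ∈ p.support, ¬ G.Adj c x)

/-- The closed neighborhood clique `Q_v` of a simplicial vertex. -/
def Qv (G : SimpleGraph V) (v : V) : Set V := insert v (G.neighborSet v)

/-- `S_v`: the vertices of `Q_v` having a neighbor outside `Q_v`. -/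
def Sv (G : SimpleGraph V) (v : V) : Set V :=
  {x | x ∈ Qv G v ∧ ∃ y, y ∉ Qv G v ∧ G.Adj x y}

/-- A simplicial vertex is special if `S_v` is an inclusion-maximal minimal separator. -/
def IsSpecial (G : SimpleGraph V) (v : V) : Prop :=
  IsSimplicial G v ∧ IsMinSeparator G (Sv G v) ∧
    ∀ S : Set V, IsMinSeparator G S → Sv G v ⊆ S → S = Sv G v

/-- Connected components of `G ∖ S` containing a vertex complete to `S`. -/
def CompleteComponents (G : SimpleGraph V) (S : Set V) :
    Set ((G.induce (Sᶜ : Set V)).ConnectedComponent) :=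
  {C | ∃ x : (Sᶜ : Set V), (G.induce (Sᶜ : Set V)).connectedComponentMk x = C ∧
        S ⊆ G.neighborSet x.1}

/-- The wheel graph: an `n`-cycle plus a universal vertex (`none`). -/
def wheelGraph (n : ℕ) : SimpleGraph (Option (Fin n)) :=
  SimpleGraph.fromRel (fun a b =>
    (∃ i j : Fin n, a = some i ∧ b = some j ∧ (SimpleGraph.cycleGraph n).Adj i j) ∨
    (a = none ∧ b ≠ none))

/-- `y` lies on the tree-path between `x` and `z` in `T`. -/
def OnTreePath {α : Type*} (T : SimpleGraph α) (x y z : α) : Prop :=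
  ∃ p : T.Walk x z, p.IsPath ∧ y ∈ p.support



section AuxProofs

open Fin.CommRing

lemma aux_pathGraph_isAcyclic (m : ℕ) : (SimpleGraph.pathGraph m).IsAcyclic := by
  classical
  intro v c hc
  have hne : c.support.toFinset.Nonempty := by
    simp [List.toFinset_nonempty_iff]
  set x := c.support.toFinset.max' hne with hxdef
  have hx : x ∈ c.support := by
    have := c.support.toFinset.max'_mem hne
    simpa using this
  have hmax : ∀ y ∈ c.support, y ≤ x := by
    intro y hy
    exact c.support.toFinset.le_max' y (by simpa using hy)
  have hc' := hc.rotate hx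
  have hsub : ∀ z ∈ (c.rotate x hx).support, z ∈ c.support := by
    intro z hz
    rw [Walk.support_eq_cons] at hz
    rcases List.mem_cons.mp hz with hz | hz
    · exact hz ▸ hx
    · have hperm := Walk.support_rotate c x hx
      have : z ∈ c.support.tail := hperm.mem_iff.mp hz
      rw [Walk.support_eq_cons c]
      exact List.mem_cons_of_mem _ this
  set c' := c.rotate x hx with hc'def
  clear_value c'
  cases c' with
  | nil => exact hc'.not_of_nil
  | @cons _ y _ hadj p =>
    have hy : y ∈ c.support := hsub y (by simp [Walk.support_cons, Walk.start_mem_support])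
    have hyx : (y : Fin m).val + 1 = x.val := by
      rcases pathGraph_adj.mp hadj with h | h
      · exfalso
        have := hmax y hy
        omega
      · exact h
    have hpnn : ¬ (p.reverse).Nil := Walk.not_nil_of_ne hadj.ne
    set q := p.reverse with hq
    have hzadj : (SimpleGraph.pathGraph m).Adj _ (q.getVert 1) := q.adj_snd hpnn
    set z := q.getVert 1 with hz
    have hzsup : z ∈ p.support := by
      have : z ∈ q.support := Walk.mem_support_iff_exists_getVert.mpr ⟨1, rfl, by
        have := Walk.not_nil_iff_lt_length.mp hpnn; omega⟩
      rw [hq, Walk.support_reverse, List.mem_reverse] at this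
      exact this
    have hzc : z ∈ c.support := hsub z (by simp [Walk.support_cons, hzsup])
    have hzx : z.val + 1 = x.val := by
      rcases pathGraph_adj.mp hzadj with h | h
      · exfalso
        have := hmax z hzc
        omega
      · exact h
    have hzy : z = y := Fin.ext (by omega)
    have hedge : s(x, z) ∈ q.edges := by
      have hq2 : q.edges = s(x, z) :: q.tail.edges := by
        conv_lhs => rw [← Walk.cons_tail_eq q hpnn]
        rw [Walk.edges_cons]
      rw [hq2]
      exact List.mem_cons_self
    have hedge' : s(x, y) ∈ p.edges := by
      rw [hq, Walk.edges_reverse, List.mem_reverse] at hedge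
      rwa [hzy] at hedge
    have hnodup := hc'.edges_nodup
    rw [Walk.edges_cons] at hnodup
    exact (List.nodup_cons.mp hnodup).1 hedge'

lemma aux_isTree_of_iso {α β : Type*} {G : SimpleGraph α} {H : SimpleGraph β} (e : G ≃g H)
    (h : H.IsTree) : G.IsTree := by
  constructor
  · exact e.connected_iff.mpr h.isConnected
  · intro v c hcyc
    exact h.IsAcyclic (c.map e.toHom) (hcyc.map e.toEquiv.injective)

lemma aux_pathGraph_isTree (m : ℕ) : (SimpleGraph.pathGraph (m+1)).IsTree :=
  ⟨pathGraph_connected m, aux_pathGraph_isAcyclic (m+1)⟩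

lemma aux_adj_of_connected_pair {α : Type*} {T : SimpleGraph α} {A B : α} (hAB : A ≠ B)
    (hc : (T.induce ({A, B} : Set α)).Connected) : T.Adj A B := by
  have hA : A ∈ ({A, B} : Set α) := by simp
  have hB : B ∈ ({A, B} : Set α) := by simp
  obtain ⟨w⟩ := hc.preconnected ⟨A, hA⟩ ⟨B, hB⟩
  have hnn : ¬ w.Nil := Walk.not_nil_of_ne (by simp [Subtype.ext_iff, hAB])
  have hadj := w.adj_snd hnn
  rw [comap_adj] at hadj
  simp only [Function.Embedding.coe_subtype] at hadj
  have hmem := (w.getVert 1).2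
  rcases hmem with h1 | h1
  · exfalso
    rw [show ((w.getVert 1) : α) = A from h1] at hadj
    exact T.irrefl hadj
  · rw [Set.mem_singleton_iff] at h1
    rwa [show ((w.getVert 1) : α) = B from h1] at hadj

lemma aux_ncard_le {α : Type*} [Finite α] {X : Set α} (hX : X.ncard ≤ 2) (T' : SimpleGraph ↥X)
    (x : ↥X) : (T'.neighborSet x).ncard ≤ 2 := by
  refine le_trans (le_trans (Set.ncard_le_ncard (Set.subset_univ _) Set.finite_univ) ?_) hX
  rw [Set.ncard_univ, Nat.card_coe_set_eq]

lemma aux_inducesPath_singleton {α : Type*} [Finite α] (T : SimpleGraph α) (A : α) :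
    InducesPath T {A} := by
  constructor
  · haveI : Nonempty ↥({A} : Set α) := ⟨⟨A, rfl⟩⟩
    constructor
    intro x y
    have : x = y := Subtype.ext (x.2.trans y.2.symm)
    exact this ▸ Reachable.refl x
  · intro x
    exact aux_ncard_le (by simp) _ x

lemma aux_inducesPath_pair {α : Type*} [Finite α] {T : SimpleGraph α} {A B : α}
    (h : T.Adj A B) : InducesPath T {A, B} := by
  constructor
  · haveI : Nonempty ↥({A, B} : Set α) := ⟨⟨A, by simp⟩⟩
    constructor
    have key : ∀ x : ↥({A, B} : Set α), (x : α) = A ∨ (x : α) = B := fun x => x.2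
    have hreach : ((T.induce ({A, B} : Set α)).Adj ⟨A, by simp⟩ ⟨B, by simp⟩) := by
      rw [comap_adj]; exact h
    intro x y
    rcases key x with h1 | h1 <;> rcases key y with h2 | h2
    · exact (Subtype.ext (h1.trans h2.symm) : x = y) ▸ Reachable.refl x
    · have hx : x = ⟨A, by simp⟩ := Subtype.ext h1
      have hy : y = ⟨B, by simp⟩ := Subtype.ext h2
      rw [hx, hy]; exact hreach.reachable
    · have hx : x = ⟨B, by simp⟩ := Subtype.ext h1
      have hy : y = ⟨A, by simp⟩ := Subtype.ext h2
      rw [hx, hy]; exact hreach.symm.reachable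
    · exact (Subtype.ext (h1.trans h2.symm) : x = y) ▸ Reachable.refl x
  · intro x
    refine aux_ncard_le ?_ _ x
    exact le_trans (Set.ncard_insert_le _ _) (by simp)

lemma aux_fin3 {m : ℕ} : ((3 : Fin (m+4)) : ℕ) = 3 := by
  rw [Fin.coe_ofNat_eq_mod]; exact Nat.mod_eq_of_lt (by omega)
lemma aux_fin2 {m : ℕ} : ((2 : Fin (m+4)) : ℕ) = 2 := by
  rw [Fin.coe_ofNat_eq_mod]; exact Nat.mod_eq_of_lt (by omega)
lemma aux_fin1 {m : ℕ} : ((1 : Fin (m+4)) : ℕ) = 1 := by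
  rw [Fin.coe_ofNat_eq_mod]; exact Nat.mod_eq_of_lt (by omega)

lemma aux_adj_iff {m : ℕ} {u v : Fin (m+4)} :
    (SimpleGraph.cycleGraph (m+4)).Adj u v ↔ u = v + 1 ∨ v = u + 1 := by
  have h := @cycleGraph_adj (m+2) u v
  rw [h]
  constructor
  · rintro (h1 | h1)
    · left; rw [← h1]; ring
    · right; rw [← h1]; ring
  · rintro (h1 | h1)
    · left; rw [h1]; ring
    · right; rw [h1]; ring

lemma aux_three_ne {m : ℕ} (a : Fin (m+4)) : a + 3 ≠ a := by
  intro h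
  have h2 : (3 : Fin (m+4)) = 0 := by
    have := add_eq_left.mp h
    exact this
  have h3 : ((3 : Fin (m+4)) : ℕ) = ((0 : Fin (m+4)) : ℕ) := by rw [h2]
  rw [aux_fin3] at h3
  simp at h3

lemma aux_two_ne {m : ℕ} (a : Fin (m+4)) : a + 2 ≠ a := by
  intro h
  have h2 := add_eq_left.mp h
  have h3 : ((2 : Fin (m+4)) : ℕ) = ((0 : Fin (m+4)) : ℕ) := by rw [h2]
  rw [aux_fin2] at h3
  simp at h3

lemma aux_one_ne {m : ℕ} (a : Fin (m+4)) : a + 1 ≠ a := by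
  intro h
  have h2 := add_eq_left.mp h
  have h3 : ((1 : Fin (m+4)) : ℕ) = ((0 : Fin (m+4)) : ℕ) := by rw [h2]
  rw [aux_fin1] at h3
  simp at h3

lemma aux_no_triangle {m : ℕ} {a b c : Fin (m+4)}
    (hab : (SimpleGraph.cycleGraph (m+4)).Adj a b)
    (hac : (SimpleGraph.cycleGraph (m+4)).Adj a c)
    (hbc : (SimpleGraph.cycleGraph (m+4)).Adj b c) : False := by
  have hab' := hab.ne
  have hac' := hac.ne
  have hbc' := hbc.ne
  rcases aux_adj_iff.mp hab with h1 | h1 <;> rcases aux_adj_iff.mp hac with h2 | h2 <;>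
    rcases aux_adj_iff.mp hbc with h3 | h3
  · -- a = b+1, a = c+1 → b = c
    exact hbc' (add_right_cancel (h1.symm.trans h2))
  · exact hbc' (add_right_cancel (h1.symm.trans h2))
  · -- a = b+1, c = a+1, b = c+1 : b = a + 2 = b + 3
    apply aux_three_ne b
    have h4 : b = b + 1 + 1 + 1 := by
      conv_lhs => rw [h3, h2, h1]
    rw [show b + 1 + 1 + 1 = b + 3 by ring] at h4
    exact h4.symm
  · -- a = b+1, c = a+1, c = b+1 → a = c
    exact hac' (h1.trans h3.symm)
  · -- b = a+1, a = c+1, b = c+1 → a = b contra? b = c+1 = a, so hab'.symm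
    exact hab' (h3.trans h2.symm).symm
  · -- b = a+1, a = c+1, c = b+1 : a = c + 1 = b + 2 = a + 3
    apply aux_three_ne a
    have h4 : a = a + 1 + 1 + 1 := by
      conv_lhs => rw [h2, h3, h1]
    rw [show a + 1 + 1 + 1 = a + 3 by ring] at h4
    exact h4.symm
  · -- b = a+1, c = a+1, b = c+1 → b = c+1, c = a+1, b = a+1 → c = a+1 = b → bc ne? b = c +1 and c = b -..: b = a+1 = c → hbc'
    exact hbc' (h1.trans h2.symm)
  · -- b = a+1, c = a+1 → b = c
    exact hbc' (h1.trans h2.symm)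

lemma aux_isMaxClique_pair {m : ℕ} (a : Fin (m+4)) :
    IsMaxClique (SimpleGraph.cycleGraph (m+4)) {a, a+1} := by
  have hadj : (SimpleGraph.cycleGraph (m+4)).Adj a (a+1) := aux_adj_iff.mpr (Or.inr rfl)
  constructor
  · exact isClique_pair.mpr (fun _ => hadj)
  · intro t ht hsub
    refine Set.Subset.antisymm hsub ?_
    intro c hc
    by_contra hcm
    have hca : c ≠ a := fun h => hcm (by simp [h])
    have hca1 : c ≠ a + 1 := fun h => hcm (by simp [h])
    have h1 : (SimpleGraph.cycleGraph (m+4)).Adj a c :=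
      ht (hsub (by simp)) hc hca.symm
    have h2 : (SimpleGraph.cycleGraph (m+4)).Adj (a+1) c :=
      ht (hsub (by simp)) hc hca1.symm
    exact aux_no_triangle hadj h1 h2

lemma aux_maxclique_eq {m : ℕ} (Q : Set (Fin (m+4)))
    (hQ : IsMaxClique (SimpleGraph.cycleGraph (m+4)) Q) : ∃ a, Q = {a, a+1} := by
  rcases Set.eq_empty_or_nonempty Q with h | ⟨a, ha⟩
  · exfalso
    have h2 := hQ.2 {0, 0+1} (aux_isMaxClique_pair 0).1 (h ▸ Set.empty_subset _)
    rw [h] at h2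
    exact absurd (h2 ▸ (Set.mem_insert 0 _)) (Set.notMem_empty 0)
  · have hmem : ∀ b ∈ Q, b ≠ a → b = a + 1 ∨ b = a - 1 := by
      intro b hb hba
      have hadj := hQ.1 ha hb hba.symm
      rcases aux_adj_iff.mp hadj with h1 | h1
      · right; rw [h1]; ring
      · left; exact h1
    by_cases hup : a + 1 ∈ Q
    · by_cases hdn : a - 1 ∈ Q
      · exfalso
        have hne : a - 1 ≠ a + 1 := by
          intro h
          apply aux_two_ne (a - 1)
          rw [show a - 1 + 2 = a + 1 by ring, ← h]
        have hadj := hQ.1 hdn hup hne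
        rcases aux_adj_iff.mp hadj with h1 | h1
        · apply aux_three_ne (a - 1)
          rw [show a - 1 + 3 = a + 1 + 1 by ring, ← h1]
        · apply aux_one_ne a
          have h2 : a = a - 1 := add_right_cancel h1
          calc a + 1 = a - 1 + 1 := by rw [← h2]
            _ = a := by ring
      · refine ⟨a, hQ.2 {a, a+1} (aux_isMaxClique_pair a).1 ?_⟩
        intro b hb
        by_cases hba : b = a
        · simp [hba]
        · rcases hmem b hb hba with h1 | h1
          · simp [h1]
          · exact absurd (h1 ▸ hb) hdn
    · refine ⟨a - 1, ?_⟩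
      rw [show a - 1 + 1 = a by ring]
      refine hQ.2 {a - 1, a} ?_ ?_
      · refine isClique_pair.mpr (fun _ => ?_)
        apply aux_adj_iff.mpr
        right; rw [sub_add_cancel]
      · intro b hb
        by_cases hba : b = a
        · simp [hba]
        · rcases hmem b hb hba with h1 | h1
          · exact absurd (h1 ▸ hb) hup
          · simp [h1]

lemma aux_part1 (m : ℕ) : ¬ IsPathGraph (SimpleGraph.cycleGraph (m+4)) := by
  rintro (hempty | ⟨T, hT⟩)
  · exact hempty.false 0
  classical
  let h : Fin (m+4) → MaxCliques (SimpleGraph.cycleGraph (m+4)) :=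
    fun i => ⟨{i, i+1}, aux_isMaxClique_pair i⟩
  have hval : ∀ i, (h i).1 = {i, i+1} := fun i => rfl
  have hinj : Function.Injective h := by
    intro i j hij
    have hset : ({i, i+1} : Set (Fin (m+4))) = {j, j+1} := congrArg Subtype.val hij
    have hi : i ∈ ({j, j+1} : Set (Fin (m+4))) := hset ▸ Set.mem_insert i _
    rcases hi with hi | hi
    · exact hi
    · rw [Set.mem_singleton_iff] at hi
      have hj : j ∈ ({i, i+1} : Set (Fin (m+4))) := hset ▸ Set.mem_insert j _
      rcases hj with hj | hj
      · exact hj.symm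
      · rw [Set.mem_singleton_iff] at hj
        exfalso
        apply aux_two_ne i
        rw [show i + 2 = i + 1 + 1 by ring, ← hj, ← hi]
  have hsurj : Function.Surjective h := by
    intro Q
    obtain ⟨a, ha⟩ := aux_maxclique_eq Q.1 Q.2
    exact ⟨a, Subtype.ext ha.symm⟩
  letI : Fintype (MaxCliques (SimpleGraph.cycleGraph (m+4))) := Fintype.ofFinite _
  letI : Fintype T.edgeSet := Fintype.ofFinite _
  have hcard : Fintype.card (MaxCliques (SimpleGraph.cycleGraph (m+4))) = m + 4 :=
    (Fintype.card_of_bijective ⟨hinj, hsurj⟩).symm.trans (Fintype.card_fin _)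
  have hXv : ∀ i : Fin (m+4),
      {Q : MaxCliques (SimpleGraph.cycleGraph (m+4)) | (i+1) ∈ Q.1} = {h i, h (i+1)} := by
    intro i
    ext Q
    simp only [Set.mem_setOf_eq, Set.mem_insert_iff, Set.mem_singleton_iff]
    constructor
    · intro hQ
      obtain ⟨a, ha⟩ := aux_maxclique_eq Q.1 Q.2
      rw [ha] at hQ
      rcases hQ with h1 | h1
      · right
        apply Subtype.ext
        rw [ha, hval, h1]
      · rw [Set.mem_singleton_iff] at h1
        left
        apply Subtype.ext
        rw [ha, hval, add_right_cancel h1]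
    · rintro (rfl | rfl)
      · rw [hval]; exact Set.mem_insert_iff.mpr (Or.inr rfl)
      · rw [hval]; exact Set.mem_insert _ _
  have hne : ∀ i : Fin (m+4), h i ≠ h (i+1) := by
    intro i heq
    exact aux_one_ne i (hinj heq).symm
  have hadjT : ∀ i : Fin (m+4), T.Adj (h i) (h (i+1)) := by
    intro i
    apply aux_adj_of_connected_pair (hne i)
    have := (hT.2 (i+1)).1
    rwa [hXv i] at this
  have hcount : m + 4 ≤ T.edgeFinset.card := by
    have := Finset.card_le_card_of_injOn (f := fun i : Fin (m+4) => s(h i, h (i+1)))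
      (s := Finset.univ) (t := T.edgeFinset)
      (fun i _ => by simpa [mem_edgeFinset, mem_edgeSet] using hadjT i)
      ?_
    · simpa using this
    · intro i _ j _ hij
      simp only [Sym2.eq, Sym2.rel_iff', Prod.mk.injEq, Prod.swap_prod_mk] at hij
      rcases hij with ⟨h1, h2⟩ | ⟨h1, h2⟩
      · exact hinj h1
      · exfalso
        have hi : i = j + 1 := hinj h1
        have hj : i + 1 = j := hinj h2
        apply aux_two_ne i
        rw [show i + 2 = i + 1 + 1 by ring, hj, ← hi]
  have hfin := hT.1.card_edgeFinset
  rw [hcard] at hfin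
  omega

lemma aux_ord_succ {m : ℕ} {k x y : Fin (m+4)} (hy : y ≠ k) (h : y = x + 1) :
    (y - k).val = (x - k).val + 1 := by
  have hlast : x - k ≠ Fin.last (m+3) := by
    intro hl
    apply hy
    have hx : x = Fin.last (m+3) + k := by rw [← hl]; ring
    rw [h, hx, show Fin.last (m+3) + k + 1 = (Fin.last (m+3) + 1) + k by ring,
      Fin.last_add_one, zero_add]
  have h2 : y - k = (x - k) + 1 := by rw [h]; ring
  rw [h2, Fin.val_add_one, if_neg hlast]

lemma aux_part2 (m : ℕ) (s : Set (Fin (m+4))) (hs : s ≠ Set.univ) :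
    IsPathGraph ((SimpleGraph.cycleGraph (m+4)).induce s) := by
  classical
  rcases isEmpty_or_nonempty ↥s with he | hne
  · exact Or.inl he
  right
  obtain ⟨k, hk⟩ : ∃ k, k ∉ s := by
    by_contra hcon
    push_neg at hcon
    exact hs (Set.eq_univ_iff_forall.mpr hcon)
  set G' := (SimpleGraph.cycleGraph (m+4)).induce s with hG'
  have adjval : ∀ x y : ↥s, G'.Adj x y ↔ (SimpleGraph.cycleGraph (m+4)).Adj x.1 y.1 := by
    intro x y
    rw [hG', comap_adj, Function.Embedding.coe_subtype]
  -- the order function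
  set ord : ↥s → ℕ := fun x => (x.1 - k).val with hord
  have ord_inj : Function.Injective ord := by
    intro x y hxy
    apply Subtype.ext
    have : x.1 - k = y.1 - k := Fin.ext hxy
    exact sub_left_inj.mp this
  have nk : ∀ x : ↥s, x.1 ≠ k := fun x hx => hk (hx ▸ x.2)
  have adj_ord : ∀ x y : ↥s, G'.Adj x y → ord x = ord y + 1 ∨ ord y = ord x + 1 := by
    intro x y hadj
    rcases aux_adj_iff.mp ((adjval x y).mp hadj) with h1 | h1
    · exact Or.inl (aux_ord_succ (nk x) h1)
    · exact Or.inr (aux_ord_succ (nk y) h1)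
  -- triangle-free
  have tri : ∀ a b c : ↥s, G'.Adj a b → G'.Adj a c → G'.Adj b c → False := by
    intro a b c h1 h2 h3
    exact aux_no_triangle ((adjval a b).mp h1) ((adjval a c).mp h2) ((adjval b c).mp h3)
  -- maximal cliques
  have pair_max : ∀ x y : ↥s, G'.Adj x y → IsMaxClique G' {x, y} := by
    intro x y hxy
    constructor
    · exact isClique_pair.mpr (fun _ => hxy)
    · intro t ht hsub
      refine Set.Subset.antisymm hsub ?_
      intro c hc
      by_contra hcm
      have hcx : c ≠ x := fun h => hcm (by simp [h])
      have hcy : c ≠ y := fun h => hcm (by simp [h])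
      exact tri x y c hxy (ht (hsub (by simp)) hc hcx.symm) (ht (hsub (by simp)) hc hcy.symm)
  have sing_max : ∀ x : ↥s, (∀ y, ¬ G'.Adj x y) → IsMaxClique G' {x} := by
    intro x hx
    constructor
    · exact isClique_singleton x
    · intro t ht hsub
      refine Set.Subset.antisymm hsub ?_
      intro c hc
      rw [Set.mem_singleton_iff]
      by_contra hcx
      exact hx c (ht (hsub rfl) hc (Ne.symm hcx))
  have mcne : ∀ Q : MaxCliques G', Q.1.Nonempty := by
    intro Q
    rcases Set.eq_empty_or_nonempty Q.1 with h | h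
    · exfalso
      obtain ⟨v⟩ := hne
      have h2 := Q.2.2 {v} (isClique_singleton v) (h ▸ Set.empty_subset _)
      rw [h] at h2
      exact absurd (h2 ▸ rfl : v ∈ (∅ : Set ↥s)) (Set.notMem_empty v)
    · exact h
  -- minimum element of each maximal clique
  have exmin : ∀ Q : MaxCliques G', ∃ a, a ∈ Q.1 ∧ ∀ b ∈ Q.1, ord a ≤ ord b := by
    intro Q
    obtain ⟨a, ha, hmin⟩ := Set.exists_min_image Q.1 ord (Set.toFinite _) (mcne Q)
    exact ⟨a, ha, hmin⟩
  choose mn mn_mem mn_min using exmin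
  -- shape classification
  have shape : ∀ Q : MaxCliques G',
      Q.1 = {mn Q} ∨ ∃ b, Q.1 = {mn Q, b} ∧ G'.Adj (mn Q) b ∧ ord b = ord (mn Q) + 1 := by
    intro Q
    by_cases hb : ∃ b ∈ Q.1, b ≠ mn Q
    · obtain ⟨b, hbm, hbne⟩ := hb
      right
      have hadj : G'.Adj (mn Q) b := Q.2.1 (mn_mem Q) hbm hbne.symm
      have hordb : ord b = ord (mn Q) + 1 := by
        rcases adj_ord _ _ hadj with h1 | h1
        · exact absurd h1 (by have := mn_min Q b hbm; omega)
        · exact h1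
      refine ⟨b, ?_, hadj, hordb⟩
      refine Set.Subset.antisymm ?_ ?_
      · intro c hc
        by_contra hcm
        have hc1 : c ≠ mn Q := fun h => hcm (by simp [h])
        have hc2 : c ≠ b := fun h => hcm (by simp [h])
        exact tri (mn Q) b c hadj (Q.2.1 (mn_mem Q) hc hc1.symm) (Q.2.1 hbm hc hc2.symm)
      · intro c hc
        rcases hc with h | h
        · exact h ▸ mn_mem Q
        · rw [Set.mem_singleton_iff] at h
          exact h ▸ hbm
    · left
      push_neg at hb
      refine Set.Subset.antisymm (fun c hc => hb c hc) ?_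
      intro c hc
      rw [Set.mem_singleton_iff] at hc
      exact hc ▸ mn_mem Q
  -- injectivity of the order value
  have f_inj : Function.Injective (fun Q : MaxCliques G' => ord (mn Q)) := by
    intro Q R hQR
    simp only at hQR
    have hmn : mn Q = mn R := ord_inj hQR
    have key : Q.1 = R.1 := by
      rcases shape Q with h1 | ⟨b, h1, hadj1, hord1⟩ <;> rcases shape R with h2 | ⟨c, h2, hadj2, hord2⟩
      · rw [h1, h2, hmn]
      · -- Q singleton, R pair: maximality of Q
        have hsub : Q.1 ⊆ R.1 := by
          rw [h1, h2, hmn]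
          exact Set.singleton_subset_iff.mpr (Set.mem_insert _ _)
        exact Q.2.2 R.1 R.2.1 hsub
      · have hsub : R.1 ⊆ Q.1 := by
          rw [h1, h2, hmn]
          exact Set.singleton_subset_iff.mpr (Set.mem_insert _ _)
        exact (R.2.2 Q.1 Q.2.1 hsub).symm
      · have hbc : b = c := by
          apply ord_inj
          rw [hord1, hord2, hQR]
        rw [h1, h2, hmn, hbc]
    exact Subtype.ext key
  -- tree construction via sorted finset of order values
  letI : Fintype (MaxCliques G') := Fintype.ofFinite _
  have mem_max : ∀ x : ↥s, ∃ Q : MaxCliques G', x ∈ Q.1 := by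
    intro x
    by_cases hx : ∃ y, G'.Adj x y
    · obtain ⟨y, hy⟩ := hx
      exact ⟨⟨{x, y}, pair_max x y hy⟩, Set.mem_insert _ _⟩
    · push_neg at hx
      exact ⟨⟨{x}, sing_max x hx⟩, rfl⟩
  haveI hnonemptyM : Nonempty (MaxCliques G') := by
    obtain ⟨v⟩ := hne
    obtain ⟨Q, _⟩ := mem_max v
    exact ⟨Q⟩
  set F : Finset ℕ := Finset.univ.image (fun Q : MaxCliques G' => ord (mn Q)) with hF
  have hmemF : ∀ Q : MaxCliques G', ord (mn Q) ∈ F := by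
    intro Q
    rw [hF]
    exact Finset.mem_image_of_mem _ (Finset.mem_univ Q)
  obtain ⟨m', hm'⟩ : ∃ m', F.card = m' + 1 := by
    have hc : F.card = Fintype.card (MaxCliques G') :=
      (Finset.card_image_of_injective _ f_inj).trans Finset.card_univ
    have := Fintype.card_pos (α := MaxCliques G')
    exact ⟨F.card - 1, by omega⟩
  let e0 : Fin (m'+1) ≃o ↥F := F.orderIsoOfFin hm'
  have e1bij : Function.Bijective (fun Q : MaxCliques G' => (⟨ord (mn Q), hmemF Q⟩ : ↥F)) := by
    constructor
    · intro Q R h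
      exact f_inj (congrArg Subtype.val h)
    · rintro ⟨x, hx⟩
      rw [hF] at hx
      obtain ⟨Q, _, hQ⟩ := Finset.mem_image.mp hx
      exact ⟨Q, Subtype.ext hQ⟩
  let e1 : MaxCliques G' ≃ ↥F := Equiv.ofBijective _ e1bij
  let eqv : MaxCliques G' ≃ Fin (m'+1) := e1.trans e0.symm.toEquiv
  let T : SimpleGraph (MaxCliques G') := (SimpleGraph.pathGraph (m'+1)).comap eqv.toEmbedding
  have isoT : T ≃g SimpleGraph.pathGraph (m'+1) := SimpleGraph.Iso.comap eqv _
  have hTtree : T.IsTree := aux_isTree_of_iso isoT (aux_pathGraph_isTree m')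
  have e1val : ∀ Q : MaxCliques G', (e1 Q).1 = ord (mn Q) := fun _ => rfl
  -- adjacency in T from consecutive order values
  have covT : ∀ Q R : MaxCliques G', ord (mn R) = ord (mn Q) + 1 → T.Adj Q R := by
    intro Q R h
    have hcov : e1 Q ⋖ e1 R := by
      constructor
      · rw [← Subtype.coe_lt_coe, e1val, e1val]
        omega
      · intro Z h1 h2
        rw [← Subtype.coe_lt_coe, e1val] at h1 h2
        omega
    have hcov2 : e0.symm (e1 Q) ⋖ e0.symm (e1 R) := (apply_covBy_apply_iff (e0.symm)).mpr hcov
    show (SimpleGraph.pathGraph (m'+1)).Adj (eqv Q) (eqv R)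
    exact Or.inl hcov2
  refine ⟨T, hTtree, ?_⟩
  intro v
  by_cases hiso : ∀ y, ¬ G'.Adj v y
  · have hX : {Q : MaxCliques G' | v ∈ Q.1} = {(⟨{v}, sing_max v hiso⟩ : MaxCliques G')} := by
      ext Q
      simp only [Set.mem_setOf_eq, Set.mem_singleton_iff]
      constructor
      · intro hv
        apply Subtype.ext
        rcases shape Q with h1 | ⟨b, h1, hadj1, _⟩
        · have hv2 : v = mn Q := by rw [h1] at hv; exact hv
          rw [h1, ← hv2]
        · exfalso
          rw [h1] at hv
          rcases hv with h2 | h2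
          · exact hiso b (h2 ▸ hadj1)
          · rw [Set.mem_singleton_iff] at h2
            exact hiso (mn Q) (G'.adj_symm (h2 ▸ hadj1))
      · rintro rfl
        exact rfl
    rw [hX]
    exact aux_inducesPath_singleton T _
  · push_neg at hiso
    obtain ⟨y, hy⟩ := hiso
    -- helper: the two-neighbour case
    have key : ∀ u w : ↥s, G'.Adj v u → G'.Adj v w → ord v = ord u + 1 → ord w = ord v + 1 →
        InducesPath T {Q : MaxCliques G' | v ∈ Q.1} := by
      intro u w hvu hvw h5 h6
      set Qu : MaxCliques G' := ⟨{u, v}, pair_max u v (G'.adj_symm hvu)⟩ with hQu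
      set Qw : MaxCliques G' := ⟨{v, w}, pair_max v w hvw⟩ with hQw
      have hXuw : {Q : MaxCliques G' | v ∈ Q.1} = {Qu, Qw} := by
        ext Q
        simp only [Set.mem_setOf_eq, Set.mem_insert_iff, Set.mem_singleton_iff]
        constructor
        · intro hv
          rcases shape Q with h1 | ⟨b, h1, hadj1, hord1⟩
          · exfalso
            have hv2 : v = mn Q := by rw [h1] at hv; exact hv
            have hsub : Q.1 ⊆ Qw.1 := by
              rw [h1, ← hv2]
              exact Set.singleton_subset_iff.mpr (Set.mem_insert _ _)
            have := Q.2.2 Qw.1 Qw.2.1 hsub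
            rw [h1, hQw] at this
            have hwv : w ∈ ({mn Q} : Set ↥s) := by
              rw [this]; exact Set.mem_insert_iff.mpr (Or.inr rfl)
            rw [Set.mem_singleton_iff] at hwv
            have hvv : v ∈ ({mn Q} : Set ↥s) := by
              rw [this]; exact Set.mem_insert _ _
            rw [Set.mem_singleton_iff] at hvv
            exact hvw.ne (hvv.trans hwv.symm)
          · rw [h1] at hv
            rcases hv with h2 | h2
            · -- v = mn Q, so b is a neighbour of v
              have h2o : ord v = ord (mn Q) := by rw [h2]
              rcases adj_ord _ _ hadj1 with h3 | h3
              · omega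
              · -- ord b = ord v + 1 = ord w
                have hbw : b = w := ord_inj (by omega)
                right
                apply Subtype.ext
                rw [h1, hbw, ← h2]
            · rw [Set.mem_singleton_iff] at h2
              have h2o : ord v = ord b := by rw [h2]
              -- mn Q is a neighbour of v with ord (mn Q) = ord v - 1 = ord u
              have hmu : mn Q = u := by
                apply ord_inj
                show ord (mn Q) = ord u
                omega
              left
              apply Subtype.ext
              rw [h1, hmu, ← h2]
        · rintro (rfl | rfl)
          · rw [hQu]; exact Set.mem_insert_iff.mpr (Or.inr rfl)
          · rw [hQw]; exact Set.mem_insert _ _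
      have hadjT : T.Adj Qu Qw := by
        apply covT
        have hmnu : mn Qu = u := by
          have hm1 := mn_mem Qu
          have hm2 := mn_min Qu
          rw [hQu] at hm1 hm2
          rcases hm1 with h1 | h1
          · exact h1
          · rw [Set.mem_singleton_iff] at h1
            exfalso
            have := hm2 u (Set.mem_insert _ _)
            rw [h1] at this
            omega
        have hmnw : mn Qw = v := by
          have hm1 := mn_mem Qw
          have hm2 := mn_min Qw
          rw [hQw] at hm1 hm2
          rcases hm1 with h1 | h1
          · exact h1
          · rw [Set.mem_singleton_iff] at h1
            exfalso
            have := hm2 v (Set.mem_insert _ _)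
            rw [h1] at this
            omega
        rw [hmnu, hmnw]
        omega
      rw [hXuw]
      exact aux_inducesPath_pair hadjT
    by_cases h2 : ∃ z, G'.Adj v z ∧ z ≠ y
    · obtain ⟨z, hz, hzy⟩ := h2
      rcases adj_ord _ _ hy with h3 | h3 <;> rcases adj_ord _ _ hz with h4 | h4
      · exact absurd (ord_inj (show ord z = ord y by omega)) hzy
      · exact key y z hy hz h3 h4
      · exact key z y hz hy h4 h3
      · exact absurd (ord_inj (show ord z = ord y by omega)) hzy
    · push_neg at h2
      -- only neighbour y : X = {Qvy}
      have hX : {Q : MaxCliques G' | v ∈ Q.1} =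
          {(⟨{v, y}, pair_max v y hy⟩ : MaxCliques G')} := by
        ext Q
        simp only [Set.mem_setOf_eq, Set.mem_singleton_iff]
        constructor
        · intro hv
          apply Subtype.ext
          rcases shape Q with h1 | ⟨b, h1, hadj1, hord1⟩
          · exfalso
            have hv2 : v = mn Q := by rw [h1] at hv; exact hv
            have hsub : Q.1 ⊆ ({v, y} : Set ↥s) := by
              rw [h1, ← hv2]
              exact Set.singleton_subset_iff.mpr (Set.mem_insert _ _)
            have := Q.2.2 {v, y} (pair_max v y hy).1 hsub
            rw [h1] at this
            have hyv : y ∈ ({mn Q} : Set ↥s) := by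
              rw [this]; exact Set.mem_insert_iff.mpr (Or.inr rfl)
            have hvv : v ∈ ({mn Q} : Set ↥s) := by
              rw [this]; exact Set.mem_insert _ _
            rw [Set.mem_singleton_iff] at hyv hvv
            exact hy.ne (hvv.trans hyv.symm)
          · rw [h1] at hv
            rcases hv with h2' | h2'
            · subst h2'
              have hby : b = y := h2 b hadj1
              rw [h1, hby]
            · rw [Set.mem_singleton_iff] at h2'
              subst h2'
              have hmy : mn Q = y := h2 (mn Q) (G'.adj_symm hadj1)
              rw [h1, hmy, Set.pair_comm]
        · rintro rfl
          exact Set.mem_insert _ _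
      rw [hX]
      exact aux_inducesPath_singleton T _

end AuxProofs

theorem stmt11 (n : ℕ) (hn : 4 ≤ n) :
    ¬ IsPathGraph (SimpleGraph.cycleGraph n) ∧
      ∀ s : Set (Fin n), s ≠ Set.univ → IsPathGraph ((SimpleGraph.cycleGraph n).induce s) := by
  obtain ⟨m, rfl⟩ : ∃ m, n = m + 4 := ⟨n - 4, by omega⟩
  exact ⟨aux_part1 m, fun s hs => aux_part2 m s hs⟩
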